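/- Let (L, ∘_λ, [·_λ ·]) be a transposed Poisson conformal superalgebra. Then for all homogeneous h, x, y, z ∈ L the following identity holds: (−1)^{|x||z|} [(h ∘_λ [x_γ y])_{λ+μ} z] + (−1)^{|x||y|} [(h ∘_λ [y_{μ−γ} z])_{−∂−γ} x] + (−1)^{|y||z|} [(h ∘_λ [z_{−∂−γ} x])_{−∂−μ+γ} y] = 0. -/

import Mathlib

open Polynomial
open scoped TensorProduct

noncomputable section

namespace TPCSAFormal

/-- The super-sign `(-1)^{i·j}` for parities `i, j ∈ ℤ/2ℤ`. -/
def sgn (i j : ZMod 2) : ℂ := (-1 : ℂ) ^ (i.val * j.val)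

variable (L : Type*) [AddCommGroup L] [Module ℂ L]
  [Module (Polynomial ℂ) L] [IsScalarTower ℂ (Polynomial ℂ) L]

/-- A conformal `λ`-product on the `ℂ[∂]`-module `L`, recorded by its family of `n`-th
product coefficients: `a ∘_λ b = ∑_n λ^n • coeff n a b`, with finitely many nonzero terms.
This is exactly the data of a `ℂ`-bilinear map `L ⊗ L → ℂ[λ] ⊗ L`. -/
structure ConformalProduct where
  coeff : ℕ → L →ₗ[ℂ] L →ₗ[ℂ] L
  coeff_finite : ∀ a b : L, ∃ N : ℕ, ∀ n : ℕ, N ≤ n → coeff n a b = 0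

variable {L}

/-- The value `a ∘_λ b` of the `λ`-product at `λ ∈ ℂ`.  Since `ℂ` is infinite, identities
between such values for all `λ` are equivalent to the corresponding polynomial identities. -/
def ConformalProduct.mul (m : ConformalProduct L) (lam : ℂ) (a b : L) : L :=
  ∑ᶠ n : ℕ, lam ^ n • m.coeff n a b

/-- The value `a ∘_{-∂-λ} b`, where `∂` acts on `L` as scalar multiplication by
`X ∈ ℂ[∂]` (the variable `λ` being replaced by the operator `-∂-λ`). -/
def ConformalProduct.cmul (m : ConformalProduct L) (lam : ℂ) (a b : L) : L :=
  ∑ᶠ n : ℕ, ((-((X : Polynomial ℂ) + C lam)) ^ n) • m.coeff n a b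

variable (L) in
/-- A `ℤ₂`-grading on `L` making it a `ℤ₂`-graded `ℂ[∂]`-module: `L = L₀ ⊕ L₁` with
`∂ L_i ⊆ L_i`, where `∂` acts as multiplication by `X ∈ ℂ[∂]`. -/
structure SuperModule where
  grade : ZMod 2 → Submodule ℂ L
  isInternal : DirectSum.IsInternal grade
  X_smul_mem : ∀ (i : ZMod 2) (a : L), a ∈ grade i → (X : Polynomial ℂ) • a ∈ grade i

/-- `m` is an even `λ`-product on the `ℤ₂`-graded `ℂ[∂]`-module `(L, S)`:
it is even with respect to the grading and conformally sesquilinear. -/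
structure IsLambdaProduct (S : SuperModule L) (m : ConformalProduct L) : Prop where
  even : ∀ (i j : ZMod 2) (a b : L), a ∈ S.grade i → b ∈ S.grade j →
    ∀ n : ℕ, m.coeff n a b ∈ S.grade (i + j)
  sesq_left : ∀ (lam : ℂ) (a b : L),
    m.mul lam ((X : Polynomial ℂ) • a) b = (-lam) • m.mul lam a b
  sesq_right : ∀ (lam : ℂ) (a b : L),
    m.mul lam a ((X : Polynomial ℂ) • b) =
      (X : Polynomial ℂ) • m.mul lam a b + lam • m.mul lam a b

/-- `(L, S, m)` is a commutative associative conformal superalgebra. -/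
structure IsCommAssoc (S : SuperModule L) (m : ConformalProduct L)
    extends IsLambdaProduct S m : Prop where
  comm : ∀ (i j : ZMod 2) (a b : L), a ∈ S.grade i → b ∈ S.grade j →
    ∀ lam : ℂ, m.mul lam a b = sgn i j • m.cmul lam b a
  assoc : ∀ (lam mu : ℂ) (a b c : L),
    m.mul lam a (m.mul mu b c) = m.mul (lam + mu) (m.mul lam a b) c

/-- `(L, S, br)` is a Lie conformal superalgebra. -/
structure IsLie (S : SuperModule L) (br : ConformalProduct L)
    extends IsLambdaProduct S br : Prop where
  skew : ∀ (i j : ZMod 2) (a b : L), a ∈ S.grade i → b ∈ S.grade j →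
    ∀ lam : ℂ, br.mul lam a b = -(sgn i j • br.cmul lam b a)
  jacobi : ∀ (i j : ZMod 2) (a b : L), a ∈ S.grade i → b ∈ S.grade j →
    ∀ (c : L) (lam mu : ℂ),
      br.mul lam a (br.mul mu b c) =
        br.mul (lam + mu) (br.mul lam a b) c + sgn i j • br.mul mu b (br.mul lam a c)

/-- `(L, S, m, br)` is a transposed Poisson conformal superalgebra. -/
structure IsTPCSA (S : SuperModule L) (m br : ConformalProduct L) : Prop where
  commAssoc : IsCommAssoc S m
  lie : IsLie S br
  transposedLeibniz : ∀ (i j : ZMod 2) (a b : L), a ∈ S.grade i → b ∈ S.grade j →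
    ∀ (c : L) (lam mu : ℂ),
      (2 : ℂ) • m.mul lam a (br.mul mu b c) =
        br.mul (lam + mu) (m.mul lam a b) c + sgn i j • br.mul mu b (m.mul lam a c)

/-- `(L, S, m, br)` is a Poisson conformal superalgebra. -/
structure IsPCSA (S : SuperModule L) (m br : ConformalProduct L) : Prop where
  commAssoc : IsCommAssoc S m
  lie : IsLie S br
  leibniz : ∀ (i j : ZMod 2) (a b : L), a ∈ S.grade i → b ∈ S.grade j →
    ∀ (c : L) (lam mu : ℂ),
      br.mul lam a (m.mul mu b c) =
        m.mul (lam + mu) (br.mul lam a b) c + sgn i j • m.mul mu b (br.mul lam a c)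

/-- `(L, S, br, α)` is a Hom-Lie conformal superalgebra. -/
structure IsHomLie (S : SuperModule L) (br : ConformalProduct L) (α : L → L)
    extends IsLambdaProduct S br : Prop where
  map_smul_add : ∀ (c : ℂ) (a b : L), α (c • a + b) = c • α a + α b
  map_grade : ∀ (i : ZMod 2) (a : L), a ∈ S.grade i → α a ∈ S.grade i
  commute_partial : ∀ a : L, α ((X : Polynomial ℂ) • a) = (X : Polynomial ℂ) • α a
  skew : ∀ (i j : ZMod 2) (a b : L), a ∈ S.grade i → b ∈ S.grade j →
    ∀ lam : ℂ, br.mul lam a b = -(sgn i j • br.cmul lam b a)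
  homJacobi : ∀ (i j : ZMod 2) (a b : L), a ∈ S.grade i → b ∈ S.grade j →
    ∀ (c : L) (lam mu : ℂ),
      br.mul lam (α a) (br.mul mu b c) =
        br.mul (lam + mu) (br.mul lam a b) (α c) + sgn i j • br.mul mu (α b) (br.mul lam a c)

/-- `(L, S, p)` is a left-symmetric conformal superalgebra. -/
structure IsLeftSymmetric (S : SuperModule L) (p : ConformalProduct L)
    extends IsLambdaProduct S p : Prop where
  leftSym : ∀ (i j : ZMod 2) (a b : L), a ∈ S.grade i → b ∈ S.grade j →
    ∀ (c : L) (lam mu : ℂ),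
      p.mul (lam + mu) (p.mul lam a b) c - p.mul lam a (p.mul mu b c) =
        sgn i j • (p.mul (lam + mu) (p.mul mu b a) c - p.mul mu b (p.mul lam a c))

/-- `(L, S, p)` is a (left) Novikov conformal superalgebra. -/
structure IsNovikov (S : SuperModule L) (p : ConformalProduct L)
    extends IsLeftSymmetric S p : Prop where
  novikov : ∀ (j k : ZMod 2) (b c : L), b ∈ S.grade j → c ∈ S.grade k →
    ∀ (a : L) (lam mu : ℂ),
      p.mul (lam + mu) (p.mul lam a b) c = sgn j k • p.cmul mu (p.mul lam a c) b

/-- `(L, S, mc, p)` is a Novikov-Poisson conformal superalgebra. -/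
structure IsNovikovPoisson (S : SuperModule L) (mc p : ConformalProduct L) : Prop where
  commAssoc : IsCommAssoc S mc
  novikov : IsNovikov S p
  compat₁ : ∀ (lam mu : ℂ) (a b c : L),
    p.mul (lam + mu) (mc.mul lam a b) c = mc.mul lam a (p.mul mu b c)
  compat₂ : ∀ (i j : ZMod 2) (a b : L), a ∈ S.grade i → b ∈ S.grade j →
    ∀ (c : L) (lam mu : ℂ),
      mc.mul (lam + mu) (p.mul lam a b) c - p.mul lam a (mc.mul mu b c) =
        sgn i j • (mc.mul (lam + mu) (p.mul mu b a) c - p.mul mu b (mc.mul lam a c))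

/-- `(L, S, mc, p)` is a pre-Lie commutative conformal superalgebra. -/
structure IsPreLieComm (S : SuperModule L) (mc p : ConformalProduct L) : Prop where
  commAssoc : IsCommAssoc S mc
  leftSymmetric : IsLeftSymmetric S p
  compat : ∀ (i j : ZMod 2) (a b : L), a ∈ S.grade i → b ∈ S.grade j →
    ∀ (c : L) (lam mu : ℂ),
      p.mul lam a (mc.mul mu b c) =
        mc.mul (lam + mu) (p.mul lam a b) c + sgn i j • mc.mul mu b (p.mul lam a c)

/-- `(L, S, mc, p)` is a pre-Lie Poisson conformal superalgebra. -/
structure IsPreLiePoisson (S : SuperModule L) (mc p : ConformalProduct L) : Prop where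
  commAssoc : IsCommAssoc S mc
  leftSymmetric : IsLeftSymmetric S p
  compat₁ : ∀ (lam mu : ℂ) (a b c : L),
    p.mul (lam + mu) (mc.mul lam a b) c = mc.mul lam a (p.mul mu b c)
  compat₂ : ∀ (i j : ZMod 2) (a b : L), a ∈ S.grade i → b ∈ S.grade j →
    ∀ (c : L) (lam mu : ℂ),
      mc.mul (lam + mu) (p.mul lam a b) c - p.mul lam a (mc.mul mu b c) =
        sgn i j • (mc.mul (lam + mu) (p.mul mu b a) c - p.mul mu b (mc.mul lam a c))



section Infra

lemma zmodval1 : ZMod.val (1 : ZMod 2) = 1 := rfl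
lemma zmodval2 : ZMod.val (2 : ZMod 2) = 0 := rfl
lemma zmodval3 : ZMod.val (3 : ZMod 2) = 1 := rfl
lemma zmod2_cases (a : ZMod 2) : a = 0 ∨ a = 1 := by
  fin_cases a
  exacts [Or.inl rfl, Or.inr rfl]

lemma sgn_sq (a b : ZMod 2) : sgn a b * sgn a b = 1 := by
  rcases zmod2_cases a with rfl | rfl <;> rcases zmod2_cases b with rfl | rfl <;> norm_num [sgn, zmodval1, zmodval2, zmodval3]

lemma poly_comm (p : Polynomial ℂ) (c : ℂ) (v : L) : p • (c • v) = c • (p • v) := by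
  rw [← algebraMap_smul (Polynomial ℂ) c v, ← mul_smul, ← Algebra.commutes, mul_smul,
    algebraMap_smul]

namespace ConformalProduct

lemma support_mul_finite (m : ConformalProduct L) (lam : ℂ) (a b : L) :
    (Function.support fun n => lam ^ n • m.coeff n a b).Finite := by
  obtain ⟨N, hN⟩ := m.coeff_finite a b
  refine Set.Finite.subset (Set.finite_Iio N) fun n hn => ?_
  simp only [Function.mem_support] at hn
  by_contra hlt
  simp only [Set.mem_Iio, not_lt] at hlt
  exact hn (by rw [hN n hlt, smul_zero])

lemma support_cmul_finite (m : ConformalProduct L) (lam : ℂ) (a b : L) :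
    (Function.support fun n =>
      ((-((X : Polynomial ℂ) + C lam)) ^ n) • m.coeff n a b).Finite := by
  obtain ⟨N, hN⟩ := m.coeff_finite a b
  refine Set.Finite.subset (Set.finite_Iio N) fun n hn => ?_
  simp only [Function.mem_support] at hn
  by_contra hlt
  simp only [Set.mem_Iio, not_lt] at hlt
  exact hn (by rw [hN n hlt, smul_zero])

lemma mul_add_right (m : ConformalProduct L) (lam : ℂ) (a b c : L) :
    m.mul lam a (b + c) = m.mul lam a b + m.mul lam a c := by
  unfold ConformalProduct.mul
  rw [← finsum_add_distrib (m.support_mul_finite lam a b) (m.support_mul_finite lam a c)]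
  exact finsum_congr fun n => by rw [map_add, smul_add]

lemma mul_smul_right (m : ConformalProduct L) (lam c : ℂ) (a b : L) :
    m.mul lam a (c • b) = c • m.mul lam a b := by
  unfold ConformalProduct.mul
  rw [smul_finsum' c (m.support_mul_finite lam a b)]
  exact finsum_congr fun n => by rw [map_smul, smul_comm]

lemma mul_neg_right (m : ConformalProduct L) (lam : ℂ) (a b : L) :
    m.mul lam a (-b) = -(m.mul lam a b) := by
  rw [show (-b) = (-1 : ℂ) • b by rw [neg_one_smul], m.mul_smul_right, neg_one_smul]

lemma mul_add_left (m : ConformalProduct L) (lam : ℂ) (a b c : L) :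
    m.mul lam (a + b) c = m.mul lam a c + m.mul lam b c := by
  unfold ConformalProduct.mul
  rw [← finsum_add_distrib (m.support_mul_finite lam a c) (m.support_mul_finite lam b c)]
  exact finsum_congr fun n => by rw [map_add, LinearMap.add_apply, smul_add]

lemma mul_smul_left (m : ConformalProduct L) (lam c : ℂ) (a b : L) :
    m.mul lam (c • a) b = c • m.mul lam a b := by
  unfold ConformalProduct.mul
  rw [smul_finsum' c (m.support_mul_finite lam a b)]
  exact finsum_congr fun n => by rw [map_smul, LinearMap.smul_apply, smul_comm]

lemma cmul_smul_left (m : ConformalProduct L) (lam : ℂ) (c : ℂ) (a b : L) :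
    m.cmul lam (c • a) b = c • m.cmul lam a b := by
  unfold ConformalProduct.cmul
  rw [smul_finsum' c (m.support_cmul_finite lam a b)]
  exact finsum_congr fun n => by rw [map_smul, LinearMap.smul_apply, poly_comm]

lemma cmul_neg_left (m : ConformalProduct L) (lam : ℂ) (a b : L) :
    m.cmul lam (-a) b = -(m.cmul lam a b) := by
  rw [show (-a) = (-1 : ℂ) • a by rw [neg_one_smul], m.cmul_smul_left, neg_one_smul]

end ConformalProduct

lemma SuperModule.poly_smul_mem (S : SuperModule L) (i : ZMod 2) (p : Polynomial ℂ) {a : L}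
    (ha : a ∈ S.grade i) : p • a ∈ S.grade i := by
  have hX : ∀ n : ℕ, (X : Polynomial ℂ) ^ n • a ∈ S.grade i := by
    intro n
    induction n with
    | zero => simpa using ha
    | succ n ih =>
      rw [pow_succ, mul_comm, mul_smul]
      exact S.X_smul_mem i _ ih
  induction p using Polynomial.induction_on' with
  | add p q hp hq => rw [add_smul]; exact (S.grade i).add_mem hp hq
  | monomial n c =>
    rw [← Polynomial.C_mul_X_pow_eq_monomial, mul_smul, ← Polynomial.algebraMap_eq, algebraMap_smul]
    exact (S.grade i).smul_mem c (hX n)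

lemma SuperModule.finsum_mem_grade (S : SuperModule L) (i : ZMod 2) (f : ℕ → L)
    (h : ∀ n, f n ∈ S.grade i) : (∑ᶠ n, f n) ∈ S.grade i := by
  by_cases hf : (Function.support f).Finite
  · rw [finsum_eq_sum f hf]
    exact Submodule.sum_mem _ fun n _ => h n
  · rw [finsum_of_infinite_support hf]
    exact (S.grade i).zero_mem

lemma IsLambdaProduct.mul_mem {S : SuperModule L} {m : ConformalProduct L}
    (hm : IsLambdaProduct S m) {i j : ZMod 2} {a b : L} (ha : a ∈ S.grade i)
    (hb : b ∈ S.grade j) (lam : ℂ) : m.mul lam a b ∈ S.grade (i + j) :=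
  S.finsum_mem_grade _ _ fun n =>
    (S.grade _).smul_mem _ (hm.even i j a b ha hb n)

lemma IsLie.cmul_eq {S : SuperModule L} {br : ConformalProduct L} (hL : IsLie S br)
    {i j : ZMod 2} {a b : L} (ha : a ∈ S.grade i) (hb : b ∈ S.grade j) (lam : ℂ) :
    br.cmul lam b a = -(sgn i j • br.mul lam a b) := by
  have h := hL.skew i j a b ha hb lam
  have h2 : sgn i j • br.mul lam a b = -(br.cmul lam b a) := by
    rw [h, smul_neg, smul_smul, sgn_sq, one_smul]
  rw [h2, neg_neg]


lemma sgn_aux1 (l i j k : ZMod 2) :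
    sgn i j * sgn i (l + (j + k)) = sgn l i * sgn i k := by
  rcases zmod2_cases l with rfl | rfl <;> rcases zmod2_cases i with rfl | rfl <;> rcases zmod2_cases j with rfl | rfl <;> rcases zmod2_cases k with rfl | rfl <;>
    norm_num [sgn, zmodval1, zmodval2, zmodval3]

lemma sgn_aux2 (l i j k : ZMod 2) :
    sgn j k * (sgn i k * sgn j (l + (i + k))) = sgn l j * sgn i j * sgn i k := by
  rcases zmod2_cases l with rfl | rfl <;> rcases zmod2_cases i with rfl | rfl <;> rcases zmod2_cases j with rfl | rfl <;> rcases zmod2_cases k with rfl | rfl <;>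
    norm_num [sgn, zmodval1, zmodval2, zmodval3]

lemma sgn_aux3 (l i j : ZMod 2) : sgn (l + i) j = sgn l j * sgn i j := by
  rcases zmod2_cases l with rfl | rfl <;> rcases zmod2_cases i with rfl | rfl <;> rcases zmod2_cases j with rfl | rfl <;>
    norm_num [sgn, zmodval1, zmodval2, zmodval3]

lemma sgn_aux4 (l i j : ZMod 2) : sgn i (l + j) = sgn l i * sgn i j := by
  rcases zmod2_cases l with rfl | rfl <;> rcases zmod2_cases i with rfl | rfl <;> rcases zmod2_cases j with rfl | rfl <;>
    norm_num [sgn, zmodval1, zmodval2, zmodval3]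

lemma sgn_aux5 (l i j : ZMod 2) : sgn l (i + j) = sgn l i * sgn l j := by
  rcases zmod2_cases l with rfl | rfl <;> rcases zmod2_cases i with rfl | rfl <;> rcases zmod2_cases j with rfl | rfl <;>
    norm_num [sgn, zmodval1, zmodval2, zmodval3]

end Infra

/-- the identity (3.16) in a transposed Poisson conformal superalgebra. -/
theorem statement_2 (S : SuperModule L) (m br : ConformalProduct L)
    (hT : IsTPCSA S m br) (l i j k : ZMod 2) (h x y z : L)
    (hh : h ∈ S.grade l) (hx : x ∈ S.grade i) (hy : y ∈ S.grade j) (hz : z ∈ S.grade k)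
    (lam mu gam : ℂ) :
    sgn i k • br.mul (lam + mu) (m.mul lam h (br.mul gam x y)) z
      + sgn i j • br.cmul gam (m.mul lam h (br.mul (mu - gam) y z)) x
      + sgn j k • br.cmul (mu - gam) (m.mul lam h (br.cmul gam z x)) y = 0 := by
  have hmL := hT.commAssoc.toIsLambdaProduct
  have hbL := hT.lie.toIsLambdaProduct
  have hHx : m.mul lam h x ∈ S.grade (l + i) := hmL.mul_mem hh hx lam
  have hHy : m.mul lam h y ∈ S.grade (l + j) := hmL.mul_mem hh hy lam
  have hP : br.mul gam x y ∈ S.grade (i + j) := hbL.mul_mem hx hy gam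
  have hQ : br.mul (mu - gam) y z ∈ S.grade (j + k) := hbL.mul_mem hy hz (mu - gam)
  have hR : br.mul gam x z ∈ S.grade (i + k) := hbL.mul_mem hx hz gam
  have hq : m.mul lam h (br.mul (mu - gam) y z) ∈ S.grade (l + (j + k)) :=
    hmL.mul_mem hh hQ lam
  have hr : m.mul lam h (br.mul gam x z) ∈ S.grade (l + (i + k)) := hmL.mul_mem hh hR lam
  -- Step 1: remove all `cmul`s from the goal, using skew-symmetry.
  have czx : br.cmul gam z x = -(sgn i k • br.mul gam x z) := hT.lie.cmul_eq hx hz gam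
  have minner : m.mul lam h (br.cmul gam z x)
      = -(sgn i k • m.mul lam h (br.mul gam x z)) := by
    rw [czx, m.mul_neg_right, m.mul_smul_right]
  have c2eq : br.cmul gam (m.mul lam h (br.mul (mu - gam) y z)) x
      = -(sgn i (l + (j + k)) • br.mul gam x (m.mul lam h (br.mul (mu - gam) y z))) :=
    hT.lie.cmul_eq hx hq gam
  have crx : br.cmul (mu - gam) (m.mul lam h (br.mul gam x z)) y
      = -(sgn j (l + (i + k)) • br.mul (mu - gam) y (m.mul lam h (br.mul gam x z))) :=
    hT.lie.cmul_eq hy hr (mu - gam)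
  have c3eq : br.cmul (mu - gam) (m.mul lam h (br.cmul gam z x)) y
      = sgn i k • (sgn j (l + (i + k)) •
          br.mul (mu - gam) y (m.mul lam h (br.mul gam x z))) := by
    rw [minner, br.cmul_neg_left, br.cmul_smul_left, crx, smul_neg, neg_neg]
  rw [c2eq, c3eq]
  simp only [smul_neg, smul_smul]
  rw [sgn_aux1 l i j k, sgn_aux2 l i j k]
  -- Step 2: the transposed Leibniz instances.
  have E1 := hT.transposedLeibniz l i h x hh hx (br.mul (mu - gam) y z) lam gam
  have E2 := hT.transposedLeibniz l j h y hh hy (br.mul gam x z) lam (mu - gam)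
  have E3 := hT.transposedLeibniz l (i + j) h (br.mul gam x y) hh hP z lam mu
  rw [sgn_aux5 l i j] at E3
  -- Step 3: Jacobi on (x, y, z), pushed through `m.mul lam h`.
  have jac0 := hT.lie.jacobi i j x y hx hy z gam (mu - gam)
  rw [show gam + (mu - gam) = mu by ring] at jac0
  have E5 : m.mul lam h (br.mul gam x (br.mul (mu - gam) y z))
      = m.mul lam h (br.mul mu (br.mul gam x y) z)
        + sgn i j • m.mul lam h (br.mul (mu - gam) y (br.mul gam x z)) := by
    rw [jac0, m.mul_add_right, m.mul_smul_right]
  -- Step 4: the six auxiliary identities.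
  have n1 := hT.lie.jacobi (l + i) j (m.mul lam h x) y hHx hy z (lam + gam) (mu - gam)
  rw [show lam + gam + (mu - gam) = lam + mu by ring, sgn_aux3 l i j] at n1
  have tl_xy := hT.transposedLeibniz l i h x hh hx y lam gam
  have h1 : br.mul (lam + gam) (m.mul lam h x) y
      = (2 : ℂ) • m.mul lam h (br.mul gam x y)
        + (-(sgn l i)) • br.mul gam x (m.mul lam h y) := by
    linear_combination (norm := module) -tl_xy
  have n2' : br.mul (lam + mu) (br.mul (lam + gam) (m.mul lam h x) y) z
      = (2 : ℂ) • br.mul (lam + mu) (m.mul lam h (br.mul gam x y)) z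
        + (-(sgn l i)) • br.mul (lam + mu) (br.mul gam x (m.mul lam h y)) z := by
    rw [h1, br.mul_add_left, br.mul_smul_left, br.mul_smul_left]
  have tl_xz := hT.transposedLeibniz l i h x hh hx z lam gam
  have h3 : br.mul (lam + gam) (m.mul lam h x) z
      = (2 : ℂ) • m.mul lam h (br.mul gam x z)
        + (-(sgn l i)) • br.mul gam x (m.mul lam h z) := by
    linear_combination (norm := module) -tl_xz
  have n3' : br.mul (mu - gam) y (br.mul (lam + gam) (m.mul lam h x) z)
      = (2 : ℂ) • br.mul (mu - gam) y (m.mul lam h (br.mul gam x z))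
        + (-(sgn l i)) • br.mul (mu - gam) y (br.mul gam x (m.mul lam h z)) := by
    rw [h3, br.mul_add_right, br.mul_smul_right, br.mul_smul_right]
  have n4 := hT.lie.jacobi i (l + j) x (m.mul lam h y) hx hHy z gam (lam + (mu - gam))
  rw [show gam + (lam + (mu - gam)) = lam + mu by ring, sgn_aux4 l i j] at n4
  have tl_yz := hT.transposedLeibniz l j h y hh hy z lam (mu - gam)
  have h5 : br.mul (lam + (mu - gam)) (m.mul lam h y) z
      = (2 : ℂ) • m.mul lam h (br.mul (mu - gam) y z)
        + (-(sgn l j)) • br.mul (mu - gam) y (m.mul lam h z) := by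
    linear_combination (norm := module) -tl_yz
  have n5' : br.mul gam x (br.mul (lam + (mu - gam)) (m.mul lam h y) z)
      = (2 : ℂ) • br.mul gam x (m.mul lam h (br.mul (mu - gam) y z))
        + (-(sgn l j)) • br.mul gam x (br.mul (mu - gam) y (m.mul lam h z)) := by
    rw [h5, br.mul_add_right, br.mul_smul_right, br.mul_smul_right]
  have n6 := hT.lie.jacobi i j x y hx hy (m.mul lam h z) gam (mu - gam)
  rw [show gam + (mu - gam) = mu by ring] at n6
  -- Step 5: the key identity II.
  have II : br.mul (lam + gam) (m.mul lam h x) (br.mul (mu - gam) y z)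
      = (2 : ℂ) • br.mul (lam + mu) (m.mul lam h (br.mul gam x y)) z
        + (-(2 * sgn l i)) • br.mul gam x (m.mul lam h (br.mul (mu - gam) y z))
        + (2 * (sgn l j * sgn i j)) • br.mul (mu - gam) y (m.mul lam h (br.mul gam x z))
        + (sgn l i * sgn l j) • br.mul mu (br.mul gam x y) (m.mul lam h z)
        + (sgn l i * sgn l i * sgn i j) •
            br.mul (lam + (mu - gam)) (m.mul lam h y) (br.mul gam x z) := by
    linear_combination (norm := module) n1 + n2' + (sgn l j * sgn i j) • n3'
      + (sgn l i) • n4 + (-(sgn l i)) • n5' + (sgn l i * sgn l j) • n6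
  rw [show sgn l i * sgn l i * sgn i j = sgn i j by rw [sgn_sq, one_mul]] at II
  -- Step 6: conclude.
  linear_combination (norm := module) (-(sgn i k)) • E1 + (sgn i j * sgn i k) • E2
    + (sgn i k) • E3 + (2 * sgn i k) • E5 + (-(sgn i k)) • II
end TPCSAFormal
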